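/- arXiv:2104.12331 — 6 statements merged into one kernel-verified Lean document; each statement's English description precedes it below -/
import Mathlib

section
/- For every integer a ≥ 2, there is no 3-covering of [a]×[2]. That is, there do not exist nonempty proper subsets A_1, A_2, A_3 ⊊ [a] and nonempty proper subsets B_1, B_2, B_3 ⊊ [2] = {1,2} with [a]×[2] ⊆ (A_1×B_1) ∪ (A_2×B_2) ∪ (A_3×B_3). -/
/-- A `k`-covering of `[a]×[b]`: subsets `A_ℓ ⊆ [a] = {1,…,a}` and `B_ℓ ⊆ [b] = {1,…,b}`,
each a nonempty proper subset, with `[a]×[b] ⊆ ⋃_ℓ (A_ℓ × B_ℓ)`. -/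
def IsCovering (a b k : ℕ) (A B : Fin k → Finset ℕ) : Prop :=
  (∀ ℓ : Fin k, A ℓ ⊆ Finset.Icc 1 a ∧ (A ℓ).Nonempty ∧ A ℓ ≠ Finset.Icc 1 a) ∧
  (∀ ℓ : Fin k, B ℓ ⊆ Finset.Icc 1 b ∧ (B ℓ).Nonempty ∧ B ℓ ≠ Finset.Icc 1 b) ∧
  (∀ x ∈ Finset.Icc 1 a, ∀ y ∈ Finset.Icc 1 b, ∃ ℓ : Fin k, x ∈ A ℓ ∧ y ∈ B ℓ)

lemma subset12 (S : Finset ℕ) (hsub : S ⊆ Finset.Icc 1 2) (hne : S.Nonempty)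
    (hproper : S ≠ Finset.Icc 1 2) : S = {1} ∨ S = {2} := by
  have hIcc : Finset.Icc 1 2 = {1, 2} := by decide
  rw [hIcc] at hsub hproper
  have hmem : S ∈ ({1, 2} : Finset ℕ).powerset := Finset.mem_powerset.2 hsub
  fin_cases hmem <;>
    first
      | exact Or.inl (by decide)
      | exact Or.inr (by decide)
      | exact absurd (by decide) hproper
      | simp_all

/-- For every `a ≥ 2`, there is no 3-covering of `[a]×[2]`. -/
theorem stmt_7 (a : ℕ) (ha : 2 ≤ a) :
    ¬ ∃ A B : Fin 3 → Finset ℕ, IsCovering a 2 3 A B := by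
  rintro ⟨A, B, hA, hB, hcov⟩
  have hBval : ∀ ℓ : Fin 3, B ℓ = {1} ∨ B ℓ = {2} := fun ℓ =>
    subset12 (B ℓ) (hB ℓ).1 (hB ℓ).2.1 (hB ℓ).2.2
  have key : ∀ (y : ℕ) (ℓ0 : Fin 3), y ∈ Finset.Icc 1 2 →
      (∀ ℓ, y ∈ B ℓ → ℓ = ℓ0) → False := by
    intro y ℓ0 hy huniq
    have hAeq : A ℓ0 = Finset.Icc 1 a := by
      apply Finset.Subset.antisymm (hA ℓ0).1
      intro x hx
      obtain ⟨ℓ, hxa, hyb⟩ := hcov x hx y hy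
      rwa [huniq ℓ hyb] at hxa
    exact (hA ℓ0).2.2 hAeq
  rcases hBval 0 with h0 | h0 <;> rcases hBval 1 with h1 | h1 <;>
    rcases hBval 2 with h2 | h2
  · exact key 2 0 (by decide) (fun ℓ hℓ => by
      have h : ℓ = 0 ∨ ℓ = 1 ∨ ℓ = 2 := by omega
      rcases h with rfl | rfl | rfl <;> simp [h0, h1, h2] at hℓ ⊢)
  · exact key 2 2 (by decide) (fun ℓ hℓ => by
      have h : ℓ = 0 ∨ ℓ = 1 ∨ ℓ = 2 := by omega
      rcases h with rfl | rfl | rfl <;> simp [h0, h1, h2] at hℓ ⊢)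
  · exact key 2 1 (by decide) (fun ℓ hℓ => by
      have h : ℓ = 0 ∨ ℓ = 1 ∨ ℓ = 2 := by omega
      rcases h with rfl | rfl | rfl <;> simp [h0, h1, h2] at hℓ ⊢)
  · exact key 1 0 (by decide) (fun ℓ hℓ => by
      have h : ℓ = 0 ∨ ℓ = 1 ∨ ℓ = 2 := by omega
      rcases h with rfl | rfl | rfl <;> simp [h0, h1, h2] at hℓ ⊢)
  · exact key 2 0 (by decide) (fun ℓ hℓ => by
      have h : ℓ = 0 ∨ ℓ = 1 ∨ ℓ = 2 := by omega
      rcases h with rfl | rfl | rfl <;> simp [h0, h1, h2] at hℓ ⊢)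
  · exact key 1 1 (by decide) (fun ℓ hℓ => by
      have h : ℓ = 0 ∨ ℓ = 1 ∨ ℓ = 2 := by omega
      rcases h with rfl | rfl | rfl <;> simp [h0, h1, h2] at hℓ ⊢)
  · exact key 1 2 (by decide) (fun ℓ hℓ => by
      have h : ℓ = 0 ∨ ℓ = 1 ∨ ℓ = 2 := by omega
      rcases h with rfl | rfl | rfl <;> simp [h0, h1, h2] at hℓ ⊢)
  · exact key 1 0 (by decide) (fun ℓ hℓ => by
      have h : ℓ = 0 ∨ ℓ = 1 ∨ ℓ = 2 := by omega
      rcases h with rfl | rfl | rfl <;> simp [h0, h1, h2] at hℓ ⊢)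
end

section
/- For every integer b ≥ 2, there is no 3-covering of [2]×[b]. That is, there do not exist nonempty proper subsets A_1, A_2, A_3 ⊊ [2] = {1,2} and nonempty proper subsets B_1, B_2, B_3 ⊊ [b] with [2]×[b] ⊆ (A_1×B_1) ∪ (A_2×B_2) ∪ (A_3×B_3). -/
/-- For every `b ≥ 2`, there is no 3-covering of `[2]×[b]`. -/
theorem stmt_8 (b : ℕ) (hb : 2 ≤ b) :
    ¬ ∃ A B : Fin 3 → Finset ℕ, IsCovering 2 b 3 A B := by
  rintro ⟨A, B, hA, hB, hcov⟩
  have h1b : (1 : ℕ) ∈ Finset.Icc 1 b := by simp [Finset.mem_Icc]; omega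
  have hA12 : ∀ ℓ : Fin 3, A ℓ = {1} ∨ A ℓ = {2} := by
    intro ℓ
    obtain ⟨hsub, hne, hprop⟩ := hA ℓ
    have hI : Finset.Icc 1 2 = ({1, 2} : Finset ℕ) := by decide
    rw [hI] at hsub hprop
    by_cases m1 : 1 ∈ A ℓ <;> by_cases m2 : 2 ∈ A ℓ
    · exact absurd (Finset.Subset.antisymm hsub
        (by simp [Finset.insert_subset_iff, m1, m2])) hprop
    · left
      refine Finset.Subset.antisymm (fun x hx => ?_) (by simpa)
      have := hsub hx
      simp at this ⊢
      rcases this with h | h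
      · exact h
      · exact absurd (h ▸ hx) m2
    · right
      refine Finset.Subset.antisymm (fun x hx => ?_) (by simpa)
      have := hsub hx
      simp at this ⊢
      rcases this with h | h
      · exact absurd (h ▸ hx) m1
      · exact h
    · obtain ⟨x, hx⟩ := hne
      have := hsub hx
      simp at this
      rcases this with h | h
      · exact absurd (h ▸ hx) m1
      · exact absurd (h ▸ hx) m2
  have hBfull : ∀ ℓ0 : Fin 3, (∀ y ∈ Finset.Icc 1 b, y ∈ B ℓ0) → False := fun ℓ0 h =>
    (hB ℓ0).2.2 (Finset.Subset.antisymm (hB ℓ0).1 h)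
  have key : ∀ ℓ0 : Fin 3, (∀ ℓ : Fin 3, 1 ∈ A ℓ → ℓ = ℓ0) → False := by
    intro ℓ0 h
    refine hBfull ℓ0 fun y hy => ?_
    obtain ⟨ℓ, hxA, hyB⟩ := hcov 1 (by decide) y hy
    rwa [h ℓ hxA] at hyB
  have key2 : ∀ ℓ0 : Fin 3, (∀ ℓ : Fin 3, 2 ∈ A ℓ → ℓ = ℓ0) → False := by
    intro ℓ0 h
    refine hBfull ℓ0 fun y hy => ?_
    obtain ⟨ℓ, hxA, hyB⟩ := hcov 2 (by decide) y hy
    rwa [h ℓ hxA] at hyB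
  have none1 : (∀ ℓ : Fin 3, 1 ∉ A ℓ) → False := by
    intro h
    obtain ⟨ℓ, hxA, _⟩ := hcov 1 (by decide) 1 h1b
    exact h ℓ hxA
  have none2 : (∀ ℓ : Fin 3, 2 ∉ A ℓ) → False := by
    intro h
    obtain ⟨ℓ, hxA, _⟩ := hcov 2 (by decide) 1 h1b
    exact h ℓ hxA
  rcases hA12 0 with h0 | h0 <;> rcases hA12 1 with h1 | h1 <;> rcases hA12 2 with h2 | h2
  · exact none2 fun ℓ => by fin_cases ℓ <;> simp [h0, h1, h2]
  · exact key2 2 fun ℓ => by fin_cases ℓ <;> simp [h0, h1, h2]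
  · exact key2 1 fun ℓ => by fin_cases ℓ <;> simp [h0, h1, h2]
  · exact key 0 fun ℓ => by fin_cases ℓ <;> simp [h0, h1, h2]
  · exact key2 0 fun ℓ => by fin_cases ℓ <;> simp [h0, h1, h2]
  · exact key 1 fun ℓ => by fin_cases ℓ <;> simp [h0, h1, h2]
  · exact key 2 fun ℓ => by fin_cases ℓ <;> simp [h0, h1, h2]
  · exact none1 fun ℓ => by fin_cases ℓ <;> simp [h0, h1, h2]
end

section
/- For all integers a, b ≥ 3, k(a,b) = 3. That is, 3 is the smallest integer k ≥ 2 such that there exists a k-covering of [a]×[b]: a 3-covering of [a]×[b] exists, and no 2-covering of [a]×[b] exists. -/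
/-- The three side sets used in the 3-covering. -/
def cover3 (a : ℕ) : Fin 3 → Finset ℕ := fun ℓ =>
  if ℓ.val = 0 then Finset.Icc 1 (a - 1) else if ℓ.val = 1 then Finset.Icc 2 a else {1, a}

lemma mem_cover3 (a : ℕ) (ℓ : Fin 3) (x : ℕ) :
    x ∈ cover3 a ℓ ↔ (if ℓ.val = 0 then 1 ≤ x ∧ x ≤ a - 1
      else if ℓ.val = 1 then 2 ≤ x ∧ x ≤ a else x = 1 ∨ x = a) := by
  unfold cover3
  split
  · simp [Finset.mem_Icc]
  · split
    · simp [Finset.mem_Icc]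
    · simp

lemma side_conds (a : ℕ) (ha : 3 ≤ a) :
    ∀ ℓ : Fin 3, cover3 a ℓ ⊆ Finset.Icc 1 a ∧ (cover3 a ℓ).Nonempty ∧
      cover3 a ℓ ≠ Finset.Icc 1 a := by
  intro ℓ
  refine ⟨?_, ?_, ?_⟩
  · intro x hx
    rw [mem_cover3] at hx
    simp only [Finset.mem_Icc]
    split at hx
    · omega
    · split at hx <;> omega
  · fin_cases ℓ
    · exact ⟨1, by rw [mem_cover3]; simp; omega⟩
    · exact ⟨2, by rw [mem_cover3]; simp; omega⟩
    · exact ⟨1, by rw [mem_cover3]; simp⟩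
  · intro h
    fin_cases ℓ
    · have ha' : a ∈ Finset.Icc 1 a := by simp only [Finset.mem_Icc]; omega
      rw [← h, mem_cover3] at ha'; simp at ha'; omega
    · have h1 : (1:ℕ) ∈ Finset.Icc 1 a := by simp only [Finset.mem_Icc]; omega
      rw [← h, mem_cover3] at h1; simp at h1
    · have h2 : (2:ℕ) ∈ Finset.Icc 1 a := by simp only [Finset.mem_Icc]; omega
      rw [← h, mem_cover3] at h2; simp at h2; omega

/-- For all `a, b ≥ 3`, `k(a,b) = 3`: the least `k ≥ 2` such that a
`k`-covering of `[a]×[b]` exists is `3`. -/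
theorem stmt_10 (a b : ℕ) (ha : 3 ≤ a) (hb : 3 ≤ b) :
    IsLeast {k : ℕ | 2 ≤ k ∧ ∃ A B : Fin k → Finset ℕ, IsCovering a b k A B} 3 := by
  constructor
  · refine ⟨by norm_num, cover3 a, cover3 b, side_conds a ha, side_conds b hb, ?_⟩
    intro x hx y hy
    simp only [Finset.mem_Icc] at hx hy
    by_cases h1 : x ≤ a - 1 ∧ y ≤ b - 1
    · exact ⟨0, by rw [mem_cover3]; simp; omega, by rw [mem_cover3]; simp; omega⟩
    · by_cases h2 : 2 ≤ x ∧ 2 ≤ y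
      · exact ⟨1, by rw [mem_cover3]; simp; omega, by rw [mem_cover3]; simp; omega⟩
      · exact ⟨2, by rw [mem_cover3]; simp; omega, by rw [mem_cover3]; simp; omega⟩
  · rintro k ⟨hk2, A, B, hA, hB, hcov⟩
    by_contra hk3
    have hk : k = 2 := by omega
    subst hk
    obtain ⟨hA0s, _, hA0⟩ := hA 0
    obtain ⟨hB1s, _, hB1⟩ := hB 1
    obtain ⟨x, hxI, hxA⟩ := Finset.exists_of_ssubset (lt_of_le_of_ne hA0s hA0)
    obtain ⟨y, hyI, hyB⟩ := Finset.exists_of_ssubset (lt_of_le_of_ne hB1s hB1)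
    obtain ⟨ℓ, hxℓ, hyℓ⟩ := hcov x hxI y hyI
    fin_cases ℓ
    · exact hxA hxℓ
    · exact hyB hyℓ
end

section
/- For every integer a ≥ 2, k(a,2) = 4. That is, 4 is the smallest integer k ≥ 2 such that there exists a k-covering of [a]×[2]: a 4-covering of [a]×[2] exists, and no k-covering of [a]×[2] exists for k ∈ {2,3}. -/
/-- For every `a ≥ 2`, `k(a,2) = 4`: the least `k ≥ 2` such that a
`k`-covering of `[a]×[2]` exists is `4`. -/
theorem stmt_11 (a : ℕ) (ha : 2 ≤ a) :
    IsLeast {k : ℕ | 2 ≤ k ∧ ∃ A B : Fin k → Finset ℕ, IsCovering a 2 k A B} 4 := by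
  have h1sub : ({1} : Finset ℕ) ⊆ Finset.Icc 1 a := by
    simp [Finset.singleton_subset_iff, Finset.mem_Icc]; omega
  have h1ne : ({1} : Finset ℕ) ≠ Finset.Icc 1 a := by
    intro h
    have h2 : (2 : ℕ) ∈ Finset.Icc 1 a := by simp [Finset.mem_Icc]; omega
    rw [← h] at h2
    simp at h2
  have h2sub : Finset.Icc 2 a ⊆ Finset.Icc 1 a := Finset.Icc_subset_Icc (by omega) le_rfl
  have h2ne : Finset.Icc 2 a ≠ Finset.Icc 1 a := by
    intro h
    have h2 : (1 : ℕ) ∈ Finset.Icc 1 a := by simp [Finset.mem_Icc]; omega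
    rw [← h] at h2
    simp [Finset.mem_Icc] at h2
  constructor
  · refine ⟨by norm_num, ![{1}, Finset.Icc 2 a, {1}, Finset.Icc 2 a],
      ![{1}, {1}, {2}, {2}], ?_, ?_, ?_⟩
    · intro ℓ
      fin_cases ℓ <;>
        simp only [Matrix.cons_val_zero, Matrix.cons_val_one, Matrix.head_cons,
          Matrix.cons_val_two, Matrix.tail_cons, Matrix.cons_val_three] <;>
        refine ⟨?_, ?_, ?_⟩ <;>
        first
          | exact h1sub | exact h1ne | exact h2sub | exact h2ne
          | exact Finset.singleton_nonempty 1
          | exact Finset.nonempty_Icc.mpr ha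
    · intro ℓ
      fin_cases ℓ <;> refine ⟨by decide, by decide, by decide⟩
    · intro x hx y hy
      rw [Finset.mem_Icc] at hx hy
      obtain ⟨hy1, hy2⟩ := hy
      rcases Nat.lt_or_ge x 2 with hxl | hxg
      · have hx1 : x = 1 := by omega
        interval_cases y
        · exact ⟨0, by simp [hx1], by simp⟩
        · exact ⟨2, by simp [hx1], by simp⟩
      · interval_cases y
        · exact ⟨1, by simp [Finset.mem_Icc]; omega, by simp⟩
        · exact ⟨3, by simp [Finset.mem_Icc]; omega, by simp⟩
  · rintro k ⟨hk2, A, B, hA, hB, hcov⟩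
    have hBsub : ∀ ℓ, ¬(1 ∈ B ℓ ∧ 2 ∈ B ℓ) := by
      rintro ℓ ⟨hb1, hb2⟩
      obtain ⟨hs, -, hproper⟩ := hB ℓ
      apply hproper
      apply Finset.Subset.antisymm hs
      intro z hz
      rw [Finset.mem_Icc] at hz
      obtain ⟨hz1, hz2⟩ := hz
      interval_cases z <;> assumption
    have htwo : ∀ y ∈ Finset.Icc 1 2, ∃ ℓ1 ℓ2 : Fin k, ℓ1 ≠ ℓ2 ∧ y ∈ B ℓ1 ∧ y ∈ B ℓ2 := by
      intro y hy
      obtain ⟨ℓ1, hx1, hy1⟩ := hcov 1 (by simp [Finset.mem_Icc]; omega) y hy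
      obtain ⟨hs, -, hproper⟩ := hA ℓ1
      have hex : ∃ x ∈ Finset.Icc 1 a, x ∉ A ℓ1 := by
        by_contra h
        push_neg at h
        exact hproper (Finset.Subset.antisymm hs h)
      obtain ⟨x, hxm, hxn⟩ := hex
      obtain ⟨ℓ2, hx2, hy2⟩ := hcov x hxm y hy
      exact ⟨ℓ2, ℓ1, fun he => hxn (he ▸ hx2), hy2, hy1⟩
    classical
    set S1 : Finset (Fin k) := Finset.univ.filter (fun ℓ => 1 ∈ B ℓ) with hS1
    set S2 : Finset (Fin k) := Finset.univ.filter (fun ℓ => 2 ∈ B ℓ) with hS2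
    have hc1 : 2 ≤ S1.card := by
      obtain ⟨ℓ1, ℓ2, hne, hm1, hm2⟩ := htwo 1 (by decide)
      have : 1 < S1.card := Finset.one_lt_card.mpr
        ⟨ℓ1, by simp [hS1, hm1], ℓ2, by simp [hS1, hm2], hne⟩
      omega
    have hc2 : 2 ≤ S2.card := by
      obtain ⟨ℓ1, ℓ2, hne, hm1, hm2⟩ := htwo 2 (by decide)
      have : 1 < S2.card := Finset.one_lt_card.mpr
        ⟨ℓ1, by simp [hS2, hm1], ℓ2, by simp [hS2, hm2], hne⟩
      omega
    have hdisj : Disjoint S1 S2 := by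
      rw [Finset.disjoint_left]
      intro ℓ hm1 hm2
      simp [hS1] at hm1
      simp [hS2] at hm2
      exact hBsub ℓ ⟨hm1, hm2⟩
    have := Finset.card_union_of_disjoint hdisj
    have hle : (S1 ∪ S2).card ≤ k := by
      calc (S1 ∪ S2).card ≤ (Finset.univ : Finset (Fin k)).card :=
            Finset.card_le_card (Finset.subset_univ _)
        _ = k := by simp
    omega
end

section
/- For every integer b ≥ 2, k(2,b) = 4. That is, 4 is the smallest integer k ≥ 2 such that there exists a k-covering of [2]×[b]: a 4-covering of [2]×[b] exists, and no k-covering of [2]×[b] exists for k ∈ {2,3}. -/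
/-- For every `b ≥ 2`, `k(2,b) = 4`: the least `k ≥ 2` such that a
`k`-covering of `[2]×[b]` exists is `4`. -/
theorem stmt_12 (b : ℕ) (hb : 2 ≤ b) :
    IsLeast {k : ℕ | 2 ≤ k ∧ ∃ A B : Fin k → Finset ℕ, IsCovering 2 b k A B} 4 := by
  have h1b : (1 : ℕ) ∈ Finset.Icc 1 b := by simp; omega
  have h2b : (2 : ℕ) ∈ Finset.Icc 1 b := by simp; omega
  constructor
  · refine ⟨by norm_num, ![{1},{1},{2},{2}], ![{1}, Finset.Icc 2 b, {1}, Finset.Icc 2 b],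
      ?_, ?_, ?_⟩
    · intro ℓ
      fin_cases ℓ <;> refine ⟨by decide, by decide, by decide⟩
    · intro ℓ
      have hne1 : ({1} : Finset ℕ) ≠ Finset.Icc 1 b := by
        intro h
        have := h ▸ h2b
        simp at this
      have hne2 : Finset.Icc 2 b ≠ Finset.Icc 1 b := by
        intro h
        have := h ▸ h1b
        simp at this
      have hsub : Finset.Icc 2 b ⊆ Finset.Icc 1 b := by
        intro x hx; simp at hx ⊢; omega
      have hne : (Finset.Icc 2 b).Nonempty := ⟨2, by simp; omega⟩
      fin_cases ℓ <;>
        simp_all [Finset.singleton_subset_iff]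
    · intro x hx y hy
      simp only [Finset.mem_Icc] at hx hy
      rcases Nat.lt_or_ge y 2 with hy2 | hy2
      · have : y = 1 := by omega
        subst this
        rcases (by omega : x = 1 ∨ x = 2) with rfl | rfl
        · exact ⟨0, by decide, by simp⟩
        · exact ⟨2, by decide, by simp⟩
      · have hyB : y ∈ Finset.Icc 2 b := by simp; omega
        rcases (by omega : x = 1 ∨ x = 2) with rfl | rfl
        · exact ⟨1, by decide, by simpa using hyB⟩
        · exact ⟨3, by decide, by simpa using hyB⟩
  · rintro k ⟨hk2, A, B, hA, hB, hcov⟩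
    classical
    set S1 : Finset (Fin k) := Finset.univ.filter (fun ℓ => 1 ∈ A ℓ) with hS1
    set S2 : Finset (Fin k) := Finset.univ.filter (fun ℓ => 2 ∈ A ℓ) with hS2
    have hdisj : Disjoint S1 S2 := by
      rw [Finset.disjoint_left]
      intro ℓ h1 h2
      simp [hS1, hS2] at h1 h2
      have := (hA ℓ).2.2
      apply this
      apply Finset.Subset.antisymm (hA ℓ).1
      intro x hx
      rw [Finset.mem_Icc] at hx
      rcases (by omega : x = 1 ∨ x = 2) with rfl | rfl
      · exact h1
      · exact h2
    have key : ∀ (x : ℕ) (S : Finset (Fin k)), (S = Finset.univ.filter (fun ℓ => x ∈ A ℓ)) →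
        x ∈ Finset.Icc 1 2 → 2 ≤ S.card := by
      intro x S hS hx
      by_contra h
      push_neg at h
      interval_cases hc : S.card
      · rw [Finset.card_eq_zero] at hc
        obtain ⟨ℓ, hℓ1, _⟩ := hcov x hx 1 h1b
        have : ℓ ∈ S := by rw [hS]; simp [hℓ1]
        simp [hc] at this
      · rw [Finset.card_eq_one] at hc
        obtain ⟨ℓ0, hℓ0⟩ := hc
        apply (hB ℓ0).2.2
        apply Finset.Subset.antisymm (hB ℓ0).1
        intro y hy
        obtain ⟨ℓ, hℓ1, hℓ2⟩ := hcov x hx y hy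
        have : ℓ ∈ S := by rw [hS]; simp [hℓ1]
        rw [hℓ0, Finset.mem_singleton] at this
        subst this
        exact hℓ2
    have h1 : 2 ≤ S1.card := key 1 S1 hS1 (by decide)
    have h2 : 2 ≤ S2.card := key 2 S2 hS2 (by decide)
    calc 4 ≤ S1.card + S2.card := by omega
      _ = (S1 ∪ S2).card := (Finset.card_union_of_disjoint hdisj).symm
      _ ≤ (Finset.univ : Finset (Fin k)).card := Finset.card_le_card (Finset.subset_univ _)
      _ = k := by simp
end

section
/- w(3) = 9. That is: (i) there exists a 3-covering of [3]×[3] (so the value ab = 9 is attained); and (ii) for all integers a, b ≥ 2, if there exists a 3-covering of [a]×[b] then a ≥ 3 and b ≥ 3, hence ab ≥ 9. -/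
lemma covering_swap {a b k : ℕ} {A B : Fin k → Finset ℕ} (h : IsCovering a b k A B) :
    IsCovering b a k B A := by
  obtain ⟨hA, hB, hcov⟩ := h
  exact ⟨hB, hA, fun y hy x hx => by
    obtain ⟨ℓ, h1, h2⟩ := hcov x hx y hy; exact ⟨ℓ, h2, h1⟩⟩

lemma no_covering_two {b : ℕ} {A B : Fin 3 → Finset ℕ} (h : IsCovering 2 b 3 A B) : False := by
  obtain ⟨hA, hB, hcov⟩ := h
  have hone : ∀ ℓ, 1 ∈ A ℓ ∨ 2 ∈ A ℓ := by
    intro ℓ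
    obtain ⟨x, hx⟩ := (hA ℓ).2.1
    have h' := (hA ℓ).1 hx
    rw [Finset.mem_Icc] at h'
    obtain ⟨hx1, hx2⟩ := h'
    interval_cases x
    · exact Or.inl hx
    · exact Or.inr hx
  have hnot : ∀ ℓ, ¬(1 ∈ A ℓ ∧ 2 ∈ A ℓ) := by
    rintro ℓ ⟨h1, h2⟩
    apply (hA ℓ).2.2
    apply Finset.Subset.antisymm (hA ℓ).1
    intro z hz
    rw [Finset.mem_Icc] at hz
    obtain ⟨hz1, hz2⟩ := hz
    interval_cases z
    · exact h1
    · exact h2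
  -- key: get unique column index
  have key : ∃ x ∈ Finset.Icc 1 2, ∃ ℓ0 : Fin 3, ∀ ℓ, x ∈ A ℓ → ℓ = ℓ0 := by
    have m12 : (1 : ℕ) ∈ Finset.Icc 1 2 := by decide
    have m22 : (2 : ℕ) ∈ Finset.Icc 1 2 := by decide
    by_cases h0 : 1 ∈ A 0 <;> by_cases h1 : 1 ∈ A 1 <;> by_cases h2 : 1 ∈ A 2
    · exact ⟨2, m22, 0, fun ℓ hm => by
        fin_cases ℓ
        · rfl
        · exact absurd ⟨h1, hm⟩ (hnot 1)
        · exact absurd ⟨h2, hm⟩ (hnot 2)⟩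
    · exact ⟨2, m22, 2, fun ℓ hm => by
        fin_cases ℓ
        · exact absurd ⟨h0, hm⟩ (hnot 0)
        · exact absurd ⟨h1, hm⟩ (hnot 1)
        · rfl⟩
    · exact ⟨2, m22, 1, fun ℓ hm => by
        fin_cases ℓ
        · exact absurd ⟨h0, hm⟩ (hnot 0)
        · rfl
        · exact absurd ⟨h2, hm⟩ (hnot 2)⟩
    · exact ⟨1, m12, 0, fun ℓ hm => by
        fin_cases ℓ
        · rfl
        · exact absurd hm h1
        · exact absurd hm h2⟩
    · exact ⟨2, m22, 0, fun ℓ hm => by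
        fin_cases ℓ
        · rfl
        · exact absurd ⟨h1, hm⟩ (hnot 1)
        · exact absurd ⟨h2, hm⟩ (hnot 2)⟩
    · exact ⟨1, m12, 1, fun ℓ hm => by
        fin_cases ℓ
        · exact absurd hm h0
        · rfl
        · exact absurd hm h2⟩
    · exact ⟨1, m12, 2, fun ℓ hm => by
        fin_cases ℓ
        · exact absurd hm h0
        · exact absurd hm h1
        · rfl⟩
    · exact ⟨1, m12, 0, fun ℓ hm => by
        fin_cases ℓ
        · exact absurd hm h0
        · exact absurd hm h1
        · exact absurd hm h2⟩
  obtain ⟨x, hx, ℓ0, huniq⟩ := key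
  apply (hB ℓ0).2.2
  apply Finset.Subset.antisymm (hB ℓ0).1
  intro y hy
  obtain ⟨ℓ, hAm, hBm⟩ := hcov x hx y hy
  rwa [huniq ℓ hAm] at hBm

/-- `w(3) = 9`: (i) a 3-covering of `[3]×[3]` exists (so `ab = 9` is attained);
(ii) for all `a, b ≥ 2`, if a 3-covering of `[a]×[b]` exists then `a ≥ 3`, `b ≥ 3`, and hence
`ab ≥ 9`. -/
theorem stmt_13 :
    (∃ A B : Fin 3 → Finset ℕ, IsCovering 3 3 3 A B) ∧
    (∀ a b : ℕ, 2 ≤ a → 2 ≤ b →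
      (∃ A B : Fin 3 → Finset ℕ, IsCovering a b 3 A B) →
      3 ≤ a ∧ 3 ≤ b ∧ 9 ≤ a * b) := by
  constructor
  · exact ⟨![{1,2},{2,3},{1,3}], ![{1,2},{2,3},{1,3}], by unfold IsCovering; decide⟩
  · rintro a b ha hb ⟨A, B, hcov⟩
    have ha3 : 3 ≤ a := by
      rcases eq_or_lt_of_le ha with h | h
      · exfalso; exact no_covering_two (h ▸ hcov)
      · exact h
    have hb3 : 3 ≤ b := by
      rcases eq_or_lt_of_le hb with h | h
      · exfalso; exact no_covering_two (h ▸ covering_swap hcov)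
      · exact h
    exact ⟨ha3, hb3, Nat.mul_le_mul ha3 hb3⟩
end
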